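/- Fix D ≥ 2. Let λ ∈ ℝ^D with λᵢ > 0 and Σᵢ λᵢ = 1, and λ' ∈ ℝ^D with Σᵢ λ'ᵢ = 0, ordered so that λ'₁/λ₁ ≥ λ'₂/λ₂ ≥ … ≥ λ'_D/λ_D. Let 0 < m₂ < m₁ < 1. For t ∈ [0,1]^D define p(t) = m₂ + (m₁−m₂)·⟨t, λ⟩, p'(t) = (m₁−m₂)·⟨t, λ'⟩, and f(t) = p'(t)² / (p(t)(1−p(t))) (the classical Fisher information of the binary distribution (p(t), 1−p(t)) with derivative (p'(t), −p'(t)); note p(t) ∈ [m₂, m₁] ⊂ (0,1)). Then the supremum of f over t ∈ [0,1]^D equals the maximum over 1 ≤ i ≤ D−1 of max{f(𝟙_{≤i}), f(𝟙_{≥i+1})}, where 𝟙_{≤i} ∈ {0,1}^D has its first i entries equal to 1 and the rest 0, and 𝟙_{≥i+1} = 𝟙 − 𝟙_{≤i}. -/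
import Mathlib


open scoped Matrix Kronecker ComplexOrder
open Classical

noncomputable section

/-- A density matrix: positive semidefinite with unit trace. -/
def IsDensityMatrix {n : Type*} [Fintype n] (ρ : Matrix n n ℂ) : Prop :=
  ρ.PosSemidef ∧ ρ.trace = 1

/-- A POVM with `r` outcomes. -/
def IsPOVM {n : Type*} [Fintype n] [DecidableEq n] {r : ℕ}
    (M : Fin r → Matrix n n ℂ) : Prop :=
  (∀ i, (M i).PosSemidef) ∧ ∑ i, M i = 1

/-- The Fisher information of the measurement-outcome distribution. -/
def FisherInfo {n : Type*} [Fintype n] {r : ℕ}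
    (ρ ρ' : Matrix n n ℂ) (M : Fin r → Matrix n n ℂ) : ℝ :=
  ∑ i, if (ρ * M i).trace = 0 then 0
    else ((ρ' * M i).trace.re) ^ 2 / ((ρ * M i).trace.re)

/-- A quantum channel (CPTP map) given by finitely many Kraus operators. -/
def IsQuantumChannel {m n : Type*} [Fintype m] [Fintype n] [DecidableEq m]
    (E : Matrix m m ℂ → Matrix n n ℂ) : Prop :=
  ∃ (κ : ℕ) (K : Fin κ → Matrix n m ℂ),
    (∑ j, (K j)ᴴ * K j = 1) ∧ ∀ σ, E σ = ∑ j, K j * σ * (K j)ᴴ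

/-- Quantum preprocessing-optimized Fisher information. -/
def QPFI {m n : Type*} [Fintype m] [Fintype n] [DecidableEq m] {r : ℕ}
    (ρ ρ' : Matrix m m ℂ) (M : Fin r → Matrix n n ℂ) : ℝ :=
  sSup {x : ℝ | ∃ E : Matrix m m ℂ → Matrix n n ℂ,
    IsQuantumChannel E ∧ x = FisherInfo (E ρ) (E ρ') M}

/-- Quantum unitary-preprocessing-optimized Fisher information. -/
def QUPFI {n : Type*} [Fintype n] [DecidableEq n] {r : ℕ}
    (ρ ρ' : Matrix n n ℂ) (M : Fin r → Matrix n n ℂ) : ℝ :=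
  sSup {x : ℝ | ∃ U : Matrix n n ℂ, U ∈ Matrix.unitaryGroup n ℂ ∧
    x = FisherInfo (U * ρ * Uᴴ) (U * ρ' * Uᴴ) M}

/-- Complex inner product, conjugate-linear in the first argument. -/
def cInner {n : Type*} [Fintype n] (φ ψ : n → ℂ) : ℂ := ∑ k, star (φ k) * ψ k

/-- The functional whose supremum over orthonormal pairs is the normalized QPFI. -/
def gammaSummand {n : Type*} [Fintype n] {r : ℕ}
    (M : Fin r → Matrix n n ℂ) (φ φp : n → ℂ) : ℝ :=
  ∑ i, if cInner φ (M i *ᵥ φ) = 0 then 0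
    else ((cInner φ (M i *ᵥ φp)).re) ^ 2 / ((cInner φ (M i *ᵥ φ)).re)

/-- The normalized QPFI of a POVM. -/
def gammaPOVM {n : Type*} [Fintype n] {r : ℕ} (M : Fin r → Matrix n n ℂ) : ℝ :=
  sSup {x : ℝ | ∃ φ φp : n → ℂ,
    cInner φ φ = 1 ∧ cInner φp φp = 1 ∧ cInner φ φp = 0 ∧ x = gammaSummand M φ φp}

/-- Quantum Fisher information: the Fisher information optimized over all POVMs. -/
def QFI {m : Type*} [Fintype m] [DecidableEq m] (ρ ρ' : Matrix m m ℂ) : ℝ :=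
  sSup {x : ℝ | ∃ (κ : ℕ) (T : Fin κ → Matrix m m ℂ), IsPOVM T ∧ x = FisherInfo ρ ρ' T}

/-- Classical Fisher information of a finite probability distribution. -/
def classFisher {r : ℕ} (p p' : Fin r → ℝ) : ℝ :=
  ∑ i, if p i = 0 then 0 else (p' i) ^ 2 / p i

lemma persp (a b y0 y1 θ : ℝ) (ha : 0 < a) (hb : 0 < b) (h0 : 0 ≤ θ) (h1 : θ ≤ 1) :
    ((1-θ)*y0 + θ*y1)^2 / ((1-θ)*a + θ*b) ≤ (1-θ)*(y0^2/a) + θ*(y1^2/b) := by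
  have h1' : (0:ℝ) ≤ 1 - θ := by linarith
  have hd : 0 < (1-θ)*a + θ*b := by
    rcases h0.lt_or_eq with h | h
    · nlinarith [mul_pos h hb, mul_nonneg h1' ha.le]
    · rw [← h]; simpa using ha
  rw [div_le_iff₀ hd]
  have hkey : 0 ≤ y0^2/a*b + y1^2/b*a - 2*(y0*y1) := by
    have h2 : (y0^2/a*b + y1^2/b*a - 2*(y0*y1)) * (a*b) = (y0*b - y1*a)^2 := by
      field_simp; ring
    nlinarith [sq_nonneg (y0*b - y1*a), mul_pos ha hb]
  have expand : ((1-θ)*(y0^2/a) + θ*(y1^2/b)) * ((1-θ)*a + θ*b) - ((1-θ)*y0 + θ*y1)^2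
      = θ*(1-θ)*(y0^2/a*b + y1^2/b*a - 2*(y0*y1)) := by
    field_simp; ring
  nlinarith [mul_nonneg (mul_nonneg h0 h1') hkey]

lemma combo_pos (a b θ : ℝ) (ha : 0 < a) (hb : 0 < b) (h0 : 0 ≤ θ) (h1 : θ ≤ 1) :
    0 < (1-θ)*a + θ*b := by
  rcases h0.lt_or_eq with h | h
  · nlinarith [mul_pos h hb, mul_nonneg (by linarith : (0:ℝ) ≤ 1-θ) ha.le]
  · rw [← h]; simpa using ha

lemma splitG (x p : ℝ) (h0 : 0 < p) (h1 : p < 1) : x/(p*(1-p)) = x/p + x/(1-p) := by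
  have : (1:ℝ) - p ≠ 0 := by linarith
  field_simp
  ring

lemma seg2 (p0 p1 y0 y1 θ : ℝ) (hp0 : 0 < p0) (hp0' : p0 < 1) (hp1 : 0 < p1)
    (hp1' : p1 < 1) (h0 : 0 ≤ θ) (h1 : θ ≤ 1) :
    ((1-θ)*y0 + θ*y1)^2 / (((1-θ)*p0 + θ*p1) * (1 - ((1-θ)*p0 + θ*p1)))
      ≤ max (y0^2/(p0*(1-p0))) (y1^2/(p1*(1-p1))) := by
  have hq0 : (0:ℝ) < 1 - p0 := by linarith
  have hq1 : (0:ℝ) < 1 - p1 := by linarith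
  have hp : 0 < (1-θ)*p0 + θ*p1 := combo_pos _ _ _ hp0 hp1 h0 h1
  have hq : (1-θ)*p0 + θ*p1 < 1 := by
    have := combo_pos _ _ _ hq0 hq1 h0 h1
    nlinarith
  rw [splitG _ _ hp hq, splitG _ _ hp0 hp0', splitG _ _ hp1 hp1']
  have e1 : ((1-θ)*y0 + θ*y1)^2 / ((1-θ)*p0 + θ*p1)
      ≤ (1-θ)*(y0^2/p0) + θ*(y1^2/p1) := persp _ _ _ _ _ hp0 hp1 h0 h1
  have e2 : ((1-θ)*y0 + θ*y1)^2 / (1 - ((1-θ)*p0 + θ*p1))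
      ≤ (1-θ)*(y0^2/(1-p0)) + θ*(y1^2/(1-p1)) := by
    have h := persp (1-p0) (1-p1) y0 y1 θ hq0 hq1 h0 h1
    have e : (1:ℝ) - ((1-θ)*p0 + θ*p1) = (1-θ)*(1-p0) + θ*(1-p1) := by ring
    rw [e]; exact h
  have m0 : y0^2/p0 + y0^2/(1-p0) ≤ max (y0^2/p0 + y0^2/(1-p0)) (y1^2/p1 + y1^2/(1-p1)) :=
    le_max_left _ _
  have m1 : y1^2/p1 + y1^2/(1-p1) ≤ max (y0^2/p0 + y0^2/(1-p0)) (y1^2/p1 + y1^2/(1-p1)) :=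
    le_max_right _ _
  nlinarith [mul_le_mul_of_nonneg_left m0 (by linarith : (0:ℝ) ≤ 1-θ),
    mul_le_mul_of_nonneg_left m1 h0]

/-- The function `(s,y) ↦ (c y)² / (p(1-p))` with `p = m₂ + c s`, `c = m₁ - m₂`. -/
def Gm (m₁ m₂ s y : ℝ) : ℝ :=
  ((m₁-m₂)*y)^2 / ((m₂+(m₁-m₂)*s)*(1-(m₂+(m₁-m₂)*s)))

lemma p_pos (m₁ m₂ s : ℝ) (h₂ : 0 < m₂) (h₁₂ : m₂ < m₁) (h₁ : m₁ < 1)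
    (hs0 : 0 ≤ s) (hs1 : s ≤ 1) : 0 < m₂+(m₁-m₂)*s ∧ m₂+(m₁-m₂)*s < 1 := by
  constructor <;> nlinarith

lemma Gm_nonneg (m₁ m₂ s y : ℝ) (h₂ : 0 < m₂) (h₁₂ : m₂ < m₁) (h₁ : m₁ < 1)
    (hs0 : 0 ≤ s) (hs1 : s ≤ 1) : 0 ≤ Gm m₁ m₂ s y := by
  obtain ⟨hp, hq⟩ := p_pos m₁ m₂ s h₂ h₁₂ h₁ hs0 hs1
  have : 0 < (m₂+(m₁-m₂)*s)*(1-(m₂+(m₁-m₂)*s)) := by nlinarith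
  exact div_nonneg (sq_nonneg _) this.le

lemma Gm_mono_y (m₁ m₂ s y z : ℝ) (h₂ : 0 < m₂) (h₁₂ : m₂ < m₁) (h₁ : m₁ < 1)
    (hs0 : 0 ≤ s) (hs1 : s ≤ 1) (hy : y^2 ≤ z^2) :
    Gm m₁ m₂ s y ≤ Gm m₁ m₂ s z := by
  obtain ⟨hp, hq⟩ := p_pos m₁ m₂ s h₂ h₁₂ h₁ hs0 hs1
  have hd : 0 < (m₂+(m₁-m₂)*s)*(1-(m₂+(m₁-m₂)*s)) := by nlinarith
  have hnum : ((m₁-m₂)*y)^2 ≤ ((m₁-m₂)*z)^2 := by nlinarith [sq_nonneg (m₁-m₂)]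
  simp only [Gm]
  exact div_le_div_of_nonneg_right hnum hd.le

lemma Gm_seg (m₁ m₂ : ℝ) (h₂ : 0 < m₂) (h₁₂ : m₂ < m₁) (h₁ : m₁ < 1)
    (s0 s1 y0 y1 θ : ℝ) (hs0 : 0 ≤ s0) (hs0' : s0 ≤ 1) (hs1 : 0 ≤ s1) (hs1' : s1 ≤ 1)
    (h0 : 0 ≤ θ) (h1 : θ ≤ 1) :
    Gm m₁ m₂ ((1-θ)*s0+θ*s1) ((1-θ)*y0+θ*y1) ≤ max (Gm m₁ m₂ s0 y0) (Gm m₁ m₂ s1 y1) := by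
  obtain ⟨hp0, hp0'⟩ := p_pos m₁ m₂ s0 h₂ h₁₂ h₁ hs0 hs0'
  obtain ⟨hp1, hp1'⟩ := p_pos m₁ m₂ s1 h₂ h₁₂ h₁ hs1 hs1'
  have h := seg2 (m₂+(m₁-m₂)*s0) (m₂+(m₁-m₂)*s1) ((m₁-m₂)*y0) ((m₁-m₂)*y1) θ
    hp0 hp0' hp1 hp1' h0 h1
  have e1 : (m₁-m₂)*((1-θ)*y0+θ*y1) = (1-θ)*((m₁-m₂)*y0) + θ*((m₁-m₂)*y1) := by ring
  have e2 : m₂+(m₁-m₂)*((1-θ)*s0+θ*s1)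
      = (1-θ)*(m₂+(m₁-m₂)*s0) + θ*(m₂+(m₁-m₂)*s1) := by ring
  simp only [Gm]
  rw [e1, e2]
  exact h

/-- Prefix sum of the first `i` entries of `v`. -/
def psum {D : ℕ} (v : Fin D → ℝ) (i : ℕ) : ℝ :=
  ∑ j ∈ Finset.univ.filter (fun j : Fin D => (j:ℕ) < i), v j

lemma psum_zero {D : ℕ} (v : Fin D → ℝ) : psum v 0 = 0 := by simp [psum]

lemma psum_top {D : ℕ} (v : Fin D → ℝ) : psum v D = ∑ j, v j := by
  unfold psum
  congr 1
  ext j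
  simp [j.isLt]

lemma psum_succ {D : ℕ} (v : Fin D → ℝ) (k : ℕ) (hk : k < D) :
    psum v (k+1) = psum v k + v ⟨k, hk⟩ := by
  unfold psum
  have h : Finset.univ.filter (fun j : Fin D => (j:ℕ) < k+1)
      = insert ⟨k, hk⟩ (Finset.univ.filter (fun j : Fin D => (j:ℕ) < k)) := by
    ext j
    simp [Fin.ext_iff]
    omega
  rw [h, Finset.sum_insert (by simp)]
  ring

lemma psum_prefix_dot {D : ℕ} (v : Fin D → ℝ) (i : ℕ) :
    (fun j : Fin D => if (j:ℕ) < i then (1:ℝ) else 0) ⬝ᵥ v = psum v i := by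
  unfold psum dotProduct
  rw [Finset.sum_filter]
  apply Finset.sum_congr rfl
  intro j _
  by_cases h : (j:ℕ) < i <;> simp [h]

lemma psum_suffix_dot {D : ℕ} (v : Fin D → ℝ) (i : ℕ) :
    (fun j : Fin D => if i ≤ (j:ℕ) then (1:ℝ) else 0) ⬝ᵥ v = (∑ j, v j) - psum v i := by
  have e : ∀ j : Fin D, (if i ≤ (j:ℕ) then (1:ℝ) else 0) * v j
      = v j - (if (j:ℕ) < i then (1:ℝ) else 0) * v j := by
    intro j
    rcases lt_or_ge (j:ℕ) i with h | h
    · rw [if_neg (by omega), if_pos h]; ring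
    · rw [if_pos h, if_neg (by omega)]; ring
  unfold dotProduct
  rw [Finset.sum_congr rfl (fun j _ => e j), Finset.sum_sub_distrib]
  rw [← psum_prefix_dot v i]
  rfl

lemma psum_nonneg {D : ℕ} (v : Fin D → ℝ) (hv : ∀ j, 0 ≤ v j) (i : ℕ) : 0 ≤ psum v i :=
  Finset.sum_nonneg (fun j _ => hv j)

lemma psum_le_total {D : ℕ} (v : Fin D → ℝ) (hv : ∀ j, 0 ≤ v j) (i : ℕ) :
    psum v i ≤ ∑ j, v j :=
  Finset.sum_le_sum_of_subset_of_nonneg (Finset.filter_subset _ _) (fun j _ _ => hv j)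

lemma exists_k {D : ℕ} (hD : 1 ≤ D) (lam : Fin D → ℝ) (hpos : ∀ i, 0 < lam i)
    (hlsum : ∑ i, lam i = 1) (s : ℝ) (hs0 : 0 ≤ s) (hs1 : s ≤ 1) :
    ∃ k, k < D ∧ psum lam k ≤ s ∧ s ≤ psum lam (k+1) := by
  classical
  set P : ℕ → Prop := fun k => psum lam k ≤ s with hP
  set k := Nat.findGreatest P (D-1) with hk
  have hP0 : P 0 := by simp [hP, psum_zero, hs0]
  have hkle : k ≤ D - 1 := Nat.findGreatest_le _
  have hspec : P k := Nat.findGreatest_spec (Nat.zero_le _) hP0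
  refine ⟨k, lt_of_le_of_lt hkle (Nat.sub_lt (by omega) one_pos), hspec, ?_⟩
  rcases eq_or_lt_of_le hkle with he | hlt
  · have hkD : k + 1 = D := by omega
    rw [hkD, psum_top, hlsum]
    exact hs1
  · have hng : ¬ P (k+1) := Nat.findGreatest_is_greatest (Nat.lt_succ_self k) hlt
    simp only [hP, not_le] at hng
    linarith

lemma NP {D : ℕ} (lam lam' : Fin D → ℝ) (hpos : ∀ i, 0 < lam i)
    (hord : ∀ i j : Fin D, i ≤ j → lam' j / lam j ≤ lam' i / lam i)
    (t : Fin D → ℝ) (ht : ∀ i, t i ∈ Set.Icc (0:ℝ) 1) (k : Fin D) :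
    t ⬝ᵥ lam' - (lam' k / lam k) * (t ⬝ᵥ lam)
      ≤ psum lam' (k:ℕ) - (lam' k / lam k) * psum lam (k:ℕ) := by
  set r := lam' k / lam k with hr
  have hL : t ⬝ᵥ lam' - r * (t ⬝ᵥ lam) = ∑ i, t i * (lam' i - r * lam i) := by
    unfold dotProduct
    rw [Finset.mul_sum, ← Finset.sum_sub_distrib]
    apply Finset.sum_congr rfl
    intros; ring
  have hR : psum lam' (k:ℕ) - r * psum lam (k:ℕ)
      = ∑ i : Fin D, (if (i:ℕ) < (k:ℕ) then (lam' i - r * lam i) else 0) := by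
    unfold psum
    rw [Finset.mul_sum, ← Finset.sum_sub_distrib, Finset.sum_filter]
  rw [hL, hR]
  apply Finset.sum_le_sum
  intro i _
  by_cases h : (i:ℕ) < (k:ℕ)
  · rw [if_pos h]
    have hik : i ≤ k := Fin.le_def.mpr (le_of_lt h)
    have hord' := hord i k hik
    have hd : r * lam i ≤ lam' i := (le_div_iff₀ (hpos i)).mp hord'
    have := (ht i).1
    have := (ht i).2
    nlinarith
  · rw [if_neg h]
    have hki : k ≤ i := Fin.le_def.mpr (by omega)
    have hord' := hord k i hki
    have hd : lam' i ≤ r * lam i := by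
      rw [div_le_iff₀ (hpos i)] at hord'
      linarith
    have := (ht i).1
    nlinarith

lemma main_bound {D : ℕ} (hD : 2 ≤ D)
    (lam : Fin D → ℝ) (hpos : ∀ i, 0 < lam i) (hlsum : ∑ i, lam i = 1)
    (lam' : Fin D → ℝ) (hl'sum : ∑ i, lam' i = 0)
    (hord : ∀ i j : Fin D, i ≤ j → lam' j / lam j ≤ lam' i / lam i)
    (m₁ m₂ : ℝ) (h₂ : 0 < m₂) (h₁₂ : m₂ < m₁) (h₁ : m₁ < 1)
    (t : Fin D → ℝ) (ht : ∀ i, t i ∈ Set.Icc (0:ℝ) 1) :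
    ∃ k j : ℕ, k + 1 ≤ D ∧ j + 1 ≤ D ∧
      Gm m₁ m₂ (t ⬝ᵥ lam) (t ⬝ᵥ lam')
        ≤ max (max (Gm m₁ m₂ (psum lam k) (psum lam' k))
                   (Gm m₁ m₂ (psum lam (k+1)) (psum lam' (k+1))))
              (max (Gm m₁ m₂ (1 - psum lam j) (-psum lam' j))
                   (Gm m₁ m₂ (1 - psum lam (j+1)) (-psum lam' (j+1)))) := by
  have hboxS : ∀ i : ℕ, 0 ≤ psum lam i ∧ psum lam i ≤ 1 := fun i =>
    ⟨psum_nonneg _ (fun j => (hpos j).le) i, by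
      rw [← hlsum]; exact psum_le_total _ (fun j => (hpos j).le) i⟩
  have hs0 : 0 ≤ t ⬝ᵥ lam := by
    simp only [dotProduct]
    exact Finset.sum_nonneg fun i _ => mul_nonneg (ht i).1 (hpos i).le
  have hs1 : t ⬝ᵥ lam ≤ 1 := by
    simp only [dotProduct]
    rw [← hlsum]
    apply Finset.sum_le_sum
    intro i _
    nlinarith [(ht i).2, hpos i]
  -- upper bound via prefix segment
  obtain ⟨k, hkD, hk1, hk2⟩ := exists_k (by omega) lam hpos hlsum _ hs0 hs1
  have hlkpos : 0 < lam ⟨k, hkD⟩ := hpos _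
  have hsucc : psum lam (k+1) = psum lam k + lam ⟨k, hkD⟩ := psum_succ lam k hkD
  have hsucc' : psum lam' (k+1) = psum lam' k + lam' ⟨k, hkD⟩ := psum_succ lam' k hkD
  obtain ⟨θ, hθ0, hθ1, hθlk⟩ : ∃ θ : ℝ, 0 ≤ θ ∧ θ ≤ 1 ∧
      θ * lam ⟨k, hkD⟩ = t ⬝ᵥ lam - psum lam k := by
    refine ⟨(t ⬝ᵥ lam - psum lam k) / lam ⟨k, hkD⟩,
      div_nonneg (by linarith) hlkpos.le, ?_, div_mul_cancel₀ _ hlkpos.ne'⟩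
    rw [div_le_one hlkpos]
    rw [hsucc] at hk2
    linarith
  have hscomb : t ⬝ᵥ lam = (1-θ)*psum lam k + θ*psum lam (k+1) := by
    rw [hsucc]; linear_combination -hθlk
  have hnp := NP lam lam' hpos hord t ht ⟨k, hkD⟩
  simp only [Fin.val_mk] at hnp
  have hrl : lam' ⟨k, hkD⟩ / lam ⟨k, hkD⟩ * lam ⟨k, hkD⟩ = lam' ⟨k, hkD⟩ :=
    div_mul_cancel₀ _ hlkpos.ne'
  have ecross : lam' ⟨k, hkD⟩ / lam ⟨k, hkD⟩ * (t ⬝ᵥ lam)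
      - lam' ⟨k, hkD⟩ / lam ⟨k, hkD⟩ * psum lam k = θ * lam' ⟨k, hkD⟩ := by
    calc lam' ⟨k, hkD⟩ / lam ⟨k, hkD⟩ * (t ⬝ᵥ lam) - lam' ⟨k, hkD⟩ / lam ⟨k, hkD⟩ * psum lam k
        = lam' ⟨k, hkD⟩ / lam ⟨k, hkD⟩ * (θ * lam ⟨k, hkD⟩) := by rw [hθlk]; ring
      _ = θ * (lam' ⟨k, hkD⟩ / lam ⟨k, hkD⟩ * lam ⟨k, hkD⟩) := by ring
      _ = θ * lam' ⟨k, hkD⟩ := by rw [hrl]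
  have hyub : t ⬝ᵥ lam' ≤ (1-θ)*psum lam' k + θ*psum lam' (k+1) := by
    rw [hsucc']; nlinarith [hnp, ecross]
  -- lower bound via suffix segment, applying NP to 1 - t
  have htbar : ∀ i, (fun i => 1 - t i) i ∈ Set.Icc (0:ℝ) 1 := by
    intro i
    constructor
    · simp only; linarith [(ht i).2]
    · simp only; linarith [(ht i).1]
  have hsbar : (fun i => 1 - t i) ⬝ᵥ lam = 1 - t ⬝ᵥ lam := by
    simp only [dotProduct]
    have e : ∀ i : Fin D, (1 - t i) * lam i = lam i - t i * lam i := fun i => by ring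
    rw [Finset.sum_congr rfl (fun i _ => e i), Finset.sum_sub_distrib, hlsum]
  have hybar : (fun i => 1 - t i) ⬝ᵥ lam' = -(t ⬝ᵥ lam') := by
    simp only [dotProduct]
    have e : ∀ i : Fin D, (1 - t i) * lam' i = lam' i - t i * lam' i := fun i => by ring
    rw [Finset.sum_congr rfl (fun i _ => e i), Finset.sum_sub_distrib, hl'sum]
    ring
  obtain ⟨j, hjD, hj1, hj2⟩ := exists_k (by omega) lam hpos hlsum (1 - t ⬝ᵥ lam)
    (by linarith) (by linarith)
  have hljpos : 0 < lam ⟨j, hjD⟩ := hpos _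
  have hsuccj : psum lam (j+1) = psum lam j + lam ⟨j, hjD⟩ := psum_succ lam j hjD
  have hsuccj' : psum lam' (j+1) = psum lam' j + lam' ⟨j, hjD⟩ := psum_succ lam' j hjD
  obtain ⟨θ', hθ'0, hθ'1, hθ'lk⟩ : ∃ θ' : ℝ, 0 ≤ θ' ∧ θ' ≤ 1 ∧
      θ' * lam ⟨j, hjD⟩ = 1 - t ⬝ᵥ lam - psum lam j := by
    refine ⟨(1 - t ⬝ᵥ lam - psum lam j) / lam ⟨j, hjD⟩,
      div_nonneg (by linarith) hljpos.le, ?_, div_mul_cancel₀ _ hljpos.ne'⟩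
    rw [div_le_one hljpos]
    rw [hsuccj] at hj2
    linarith
  have hscomb' : t ⬝ᵥ lam = (1-θ')*(1 - psum lam j) + θ'*(1 - psum lam (j+1)) := by
    rw [hsuccj]; linear_combination hθ'lk
  have hnp' := NP lam lam' hpos hord (fun i => 1 - t i) htbar ⟨j, hjD⟩
  simp only [Fin.val_mk] at hnp'
  rw [hsbar, hybar] at hnp'
  have hrlj : lam' ⟨j, hjD⟩ / lam ⟨j, hjD⟩ * lam ⟨j, hjD⟩ = lam' ⟨j, hjD⟩ :=
    div_mul_cancel₀ _ hljpos.ne'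
  have ecross' : lam' ⟨j, hjD⟩ / lam ⟨j, hjD⟩ * (1 - t ⬝ᵥ lam)
      - lam' ⟨j, hjD⟩ / lam ⟨j, hjD⟩ * psum lam j = θ' * lam' ⟨j, hjD⟩ := by
    calc lam' ⟨j, hjD⟩ / lam ⟨j, hjD⟩ * (1 - t ⬝ᵥ lam) - lam' ⟨j, hjD⟩ / lam ⟨j, hjD⟩ * psum lam j
        = lam' ⟨j, hjD⟩ / lam ⟨j, hjD⟩ * (θ' * lam ⟨j, hjD⟩) := by rw [hθ'lk]; ring
      _ = θ' * (lam' ⟨j, hjD⟩ / lam ⟨j, hjD⟩ * lam ⟨j, hjD⟩) := by ring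
      _ = θ' * lam' ⟨j, hjD⟩ := by rw [hrlj]
  have hylb : -(t ⬝ᵥ lam') ≤ (1-θ')*psum lam' j + θ'*psum lam' (j+1) := by
    rw [hsuccj']; nlinarith [hnp', ecross']
  refine ⟨k, j, by omega, by omega, ?_⟩
  rcases le_or_gt 0 (t ⬝ᵥ lam') with hy | hy
  · -- use prefix bound
    have h2 : (t ⬝ᵥ lam')^2 ≤ ((1-θ)*psum lam' k + θ*psum lam' (k+1))^2 :=
      pow_le_pow_left₀ hy hyub 2
    have step1 : Gm m₁ m₂ (t ⬝ᵥ lam) (t ⬝ᵥ lam')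
        ≤ Gm m₁ m₂ (t ⬝ᵥ lam) ((1-θ)*psum lam' k + θ*psum lam' (k+1)) :=
      Gm_mono_y _ _ _ _ _ h₂ h₁₂ h₁ hs0 hs1 h2
    have step2 : Gm m₁ m₂ (t ⬝ᵥ lam) ((1-θ)*psum lam' k + θ*psum lam' (k+1))
        ≤ max (Gm m₁ m₂ (psum lam k) (psum lam' k))
              (Gm m₁ m₂ (psum lam (k+1)) (psum lam' (k+1))) := by
      rw [hscomb]
      exact Gm_seg m₁ m₂ h₂ h₁₂ h₁ _ _ _ _ θ (hboxS k).1 (hboxS k).2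
        (hboxS (k+1)).1 (hboxS (k+1)).2 hθ0 hθ1
    exact le_trans (le_trans step1 step2) (le_max_left _ _)
  · -- use suffix bound
    have h2' : (-(t ⬝ᵥ lam'))^2 ≤ ((1-θ')*psum lam' j + θ'*psum lam' (j+1))^2 :=
      pow_le_pow_left₀ (by linarith) hylb 2
    have h2 : (t ⬝ᵥ lam')^2 ≤ (-((1-θ')*psum lam' j + θ'*psum lam' (j+1)))^2 := by
      rw [neg_sq] at h2' ⊢; exact h2'
    have step1 : Gm m₁ m₂ (t ⬝ᵥ lam) (t ⬝ᵥ lam')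
        ≤ Gm m₁ m₂ (t ⬝ᵥ lam) (-((1-θ')*psum lam' j + θ'*psum lam' (j+1))) :=
      Gm_mono_y _ _ _ _ _ h₂ h₁₂ h₁ hs0 hs1 h2
    have eneg : -((1-θ')*psum lam' j + θ'*psum lam' (j+1))
        = (1-θ')*(-psum lam' j) + θ'*(-psum lam' (j+1)) := by ring
    have step2 : Gm m₁ m₂ (t ⬝ᵥ lam) (-((1-θ')*psum lam' j + θ'*psum lam' (j+1)))
        ≤ max (Gm m₁ m₂ (1 - psum lam j) (-psum lam' j))
              (Gm m₁ m₂ (1 - psum lam (j+1)) (-psum lam' (j+1))) := by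
      rw [hscomb', eneg]
      exact Gm_seg m₁ m₂ h₂ h₁₂ h₁ _ _ _ _ θ'
        (by linarith [(hboxS j).2]) (by linarith [(hboxS j).1])
        (by linarith [(hboxS (j+1)).2]) (by linarith [(hboxS (j+1)).1]) hθ'0 hθ'1
    exact le_trans (le_trans step1 step2) (le_max_right _ _)


theorem stmt19' {D : ℕ} (hD : 2 ≤ D)
    (lam : Fin D → ℝ) (hpos : ∀ i, 0 < lam i) (hlsum : ∑ i, lam i = 1)
    (lam' : Fin D → ℝ) (hl'sum : ∑ i, lam' i = 0)
    (hord : ∀ i j : Fin D, i ≤ j → lam' j / lam j ≤ lam' i / lam i)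
    (m₁ m₂ : ℝ) (h₂ : 0 < m₂) (h₁₂ : m₂ < m₁) (h₁ : m₁ < 1)
    (f : (Fin D → ℝ) → ℝ)
    (hf : ∀ t, f t = ((m₁ - m₂) * (t ⬝ᵥ lam')) ^ 2 /
      ((m₂ + (m₁ - m₂) * (t ⬝ᵥ lam)) * (1 - (m₂ + (m₁ - m₂) * (t ⬝ᵥ lam))))) :
    sSup {x : ℝ | ∃ t : Fin D → ℝ, (∀ i, t i ∈ Set.Icc (0 : ℝ) 1) ∧ x = f t}
      = sSup {x : ℝ | ∃ i : ℕ, 1 ≤ i ∧ i ≤ D - 1 ∧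
          (x = f (fun j => if (j : ℕ) < i then 1 else 0) ∨
           x = f (fun j => if i ≤ (j : ℕ) then 1 else 0))} := by
  have hD1 : 1 ≤ D - 1 := by omega
  set A := {x : ℝ | ∃ t : Fin D → ℝ, (∀ i, t i ∈ Set.Icc (0 : ℝ) 1) ∧ x = f t} with hA
  set B := {x : ℝ | ∃ i : ℕ, 1 ≤ i ∧ i ≤ D - 1 ∧
      (x = f (fun j => if (j : ℕ) < i then 1 else 0) ∨
       x = f (fun j => if i ≤ (j : ℕ) then 1 else 0))} with hB
  have hfG : ∀ t : Fin D → ℝ, f t = Gm m₁ m₂ (t ⬝ᵥ lam) (t ⬝ᵥ lam') := by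
    intro t; rw [hf]; rfl
  have hPval : ∀ i : ℕ, f (fun j : Fin D => if (j:ℕ) < i then (1:ℝ) else 0)
      = Gm m₁ m₂ (psum lam i) (psum lam' i) := by
    intro i; rw [hfG, psum_prefix_dot, psum_prefix_dot]
  have hQval : ∀ i : ℕ, f (fun j : Fin D => if i ≤ (j:ℕ) then (1:ℝ) else 0)
      = Gm m₁ m₂ (1 - psum lam i) (-psum lam' i) := by
    intro i
    rw [hfG, psum_suffix_dot, psum_suffix_dot, hlsum, hl'sum, zero_sub]
  have hboxS : ∀ i : ℕ, 0 ≤ psum lam i ∧ psum lam i ≤ 1 := fun i =>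
    ⟨psum_nonneg _ (fun j => (hpos j).le) i, by
      rw [← hlsum]; exact psum_le_total _ (fun j => (hpos j).le) i⟩
  -- B is finite, nonempty, bounded above
  have hBfin : B.Finite := by
    have hsub : B ⊆ ((fun i : ℕ => f (fun j : Fin D => if (j:ℕ) < i then (1:ℝ) else 0))
          '' Set.Icc 1 (D-1))
        ∪ ((fun i : ℕ => f (fun j : Fin D => if i ≤ (j:ℕ) then (1:ℝ) else 0))
          '' Set.Icc 1 (D-1)) := by
      rintro x ⟨i, h1, h2, hx | hx⟩
      · exact Or.inl ⟨i, ⟨h1, h2⟩, hx.symm⟩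
      · exact Or.inr ⟨i, ⟨h1, h2⟩, hx.symm⟩
    exact Set.Finite.subset (((Set.finite_Icc 1 (D-1)).image _).union
      ((Set.finite_Icc 1 (D-1)).image _)) hsub
  have hBbdd : BddAbove B := hBfin.bddAbove
  have hBne : B.Nonempty := ⟨f (fun j : Fin D => if (j:ℕ) < 1 then (1:ℝ) else 0),
    1, le_refl 1, hD1, Or.inl rfl⟩
  have hB0 : 0 ≤ sSup B := by
    have hmem : f (fun j : Fin D => if (j:ℕ) < 1 then (1:ℝ) else 0) ∈ B :=
      ⟨1, le_refl 1, hD1, Or.inl rfl⟩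
    have hge : 0 ≤ f (fun j : Fin D => if (j:ℕ) < 1 then (1:ℝ) else 0) := by
      rw [hPval]
      exact Gm_nonneg _ _ _ _ h₂ h₁₂ h₁ (hboxS 1).1 (hboxS 1).2
    exact le_trans hge (le_csSup hBbdd hmem)
  have hPle : ∀ i : ℕ, i ≤ D → Gm m₁ m₂ (psum lam i) (psum lam' i) ≤ sSup B := by
    intro i hiD
    rcases Nat.eq_zero_or_pos i with h0 | h1
    · subst h0
      rw [psum_zero, psum_zero]
      simpa [Gm] using hB0
    rcases eq_or_lt_of_le hiD with hD' | hlt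
    · subst hD'
      rw [psum_top lam', hl'sum]
      simpa [Gm] using hB0
    · have hmem : f (fun j : Fin D => if (j:ℕ) < i then (1:ℝ) else 0) ∈ B :=
        ⟨i, h1, by omega, Or.inl rfl⟩
      rw [← hPval i]
      exact le_csSup hBbdd hmem
  have hQle : ∀ i : ℕ, i ≤ D → Gm m₁ m₂ (1 - psum lam i) (-psum lam' i) ≤ sSup B := by
    intro i hiD
    rcases Nat.eq_zero_or_pos i with h0 | h1
    · subst h0
      rw [psum_zero, psum_zero]
      simpa [Gm] using hB0
    rcases eq_or_lt_of_le hiD with hD' | hlt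
    · subst hD'
      rw [psum_top lam', hl'sum]
      simpa [Gm] using hB0
    · have hmem : f (fun j : Fin D => if i ≤ (j:ℕ) then (1:ℝ) else 0) ∈ B :=
        ⟨i, h1, by omega, Or.inr rfl⟩
      rw [← hQval i]
      exact le_csSup hBbdd hmem
  have hmain : ∀ t : Fin D → ℝ, (∀ i, t i ∈ Set.Icc (0:ℝ) 1) → f t ≤ sSup B := by
    intro t ht
    obtain ⟨k, j, hk, hj, hle⟩ :=
      main_bound hD lam hpos hlsum lam' hl'sum hord m₁ m₂ h₂ h₁₂ h₁ t ht
    rw [hfG]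
    refine le_trans hle ?_
    exact max_le (max_le (hPle k (by omega)) (hPle (k+1) hk))
      (max_le (hQle j (by omega)) (hQle (j+1) hj))
  apply le_antisymm
  · refine csSup_le ⟨f (fun _ => 0), ⟨fun _ => 0, fun i => ⟨le_refl 0, zero_le_one⟩, rfl⟩⟩ ?_
    rintro x ⟨t, ht, rfl⟩
    exact hmain t ht
  · refine csSup_le_csSup ⟨sSup B, ?_⟩ hBne ?_
    · rintro x ⟨t, ht, rfl⟩
      exact hmain t ht
    · rintro x ⟨i, h1, h2, hx | hx⟩
      · refine ⟨fun j : Fin D => if (j:ℕ) < i then (1:ℝ) else 0, ?_, hx⟩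
        intro j
        dsimp only
        split_ifs <;> exact ⟨by norm_num, by norm_num⟩
      · refine ⟨fun j : Fin D => if i ≤ (j:ℕ) then (1:ℝ) else 0, ?_, hx⟩
        intro j
        dsimp only
        split_ifs <;> exact ⟨by norm_num, by norm_num⟩

/-- for a binary qubit measurement applied to a classically mixed state with
likelihood-ratio-ordered eigenvalues, the supremum of the Fisher information over
preprocessing vectors `t ∈ [0,1]^D` equals its maximum over the threshold vectors
`𝟙_{≤i}` and `𝟙_{≥i+1}` for `1 ≤ i ≤ D−1`. -/
theorem stmt19 {D : ℕ} (hD : 2 ≤ D)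
    (lam : Fin D → ℝ) (hpos : ∀ i, 0 < lam i) (hlsum : ∑ i, lam i = 1)
    (lam' : Fin D → ℝ) (hl'sum : ∑ i, lam' i = 0)
    (hord : ∀ i j : Fin D, i ≤ j → lam' j / lam j ≤ lam' i / lam i)
    (m₁ m₂ : ℝ) (h₂ : 0 < m₂) (h₁₂ : m₂ < m₁) (h₁ : m₁ < 1)
    (f : (Fin D → ℝ) → ℝ)
    (hf : ∀ t, f t = ((m₁ - m₂) * (t ⬝ᵥ lam')) ^ 2 /
      ((m₂ + (m₁ - m₂) * (t ⬝ᵥ lam)) * (1 - (m₂ + (m₁ - m₂) * (t ⬝ᵥ lam))))) :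
    sSup {x : ℝ | ∃ t : Fin D → ℝ, (∀ i, t i ∈ Set.Icc (0 : ℝ) 1) ∧ x = f t}
      = sSup {x : ℝ | ∃ i : ℕ, 1 ≤ i ∧ i ≤ D - 1 ∧
          (x = f (fun j => if (j : ℕ) < i then 1 else 0) ∨
           x = f (fun j => if i ≤ (j : ℕ) then 1 else 0))} :=
  stmt19' hD lam hpos hlsum lam' hl'sum hord m₁ m₂ h₂ h₁₂ h₁ f hf
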